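/- Let G be a connected simple graph on vertex set Fin N with N ≥ 2, let L be its real Laplacian matrix, and let λ₂ := sInf(spectrum ℝ L \ {0}) be its smallest nonzero eigenvalue. Then λ₂ ≥ 4 / N². -/

import Mathlib

open Matrix Finset

namespace Lambda2Aux

lemma length_drop {V : Type*} {G : SimpleGraph V} {u v : V} (p : G.Walk u v) (n : ℕ) :
    (p.drop n).length = p.length - n := by
  induction p generalizing n with
  | nil => cases n <;> simp [SimpleGraph.Walk.drop]
  | cons h q ih =>
    cases n with
    | zero => simp [SimpleGraph.Walk.drop]
    | succ n => simp [SimpleGraph.Walk.drop, ih]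

lemma dist_getVert {V : Type*} {G : SimpleGraph V} (hG : G.Connected) {i j : V}
    (p : G.Walk i j) (hp : p.length = G.dist i j) {t : ℕ} (ht : t ≤ p.length) :
    G.dist i (p.getVert t) = t := by
  have h1 : ∀ s, s ≤ p.length → G.dist i (p.getVert s) ≤ s := by
    intro s
    induction s with
    | zero => intro _; simp [p.getVert_zero]
    | succ s ih =>
      intro hs
      have hadj : G.Adj (p.getVert s) (p.getVert (s+1)) := p.adj_getVert_succ (by omega)
      calc G.dist i (p.getVert (s+1))
          ≤ G.dist i (p.getVert s) + G.dist (p.getVert s) (p.getVert (s+1)) :=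
            hG.dist_triangle
        _ ≤ s + 1 := by
            rw [SimpleGraph.dist_eq_one_iff_adj.mpr hadj]
            exact add_le_add (ih (by omega)) le_rfl
  have h2 : G.dist (p.getVert t) j ≤ p.length - t := by
    simpa [length_drop] using SimpleGraph.dist_le (p.drop t)
  have h3 : G.dist i j ≤ G.dist i (p.getVert t) + G.dist (p.getVert t) j := hG.dist_triangle
  have := h1 t ht
  omega

lemma sum_dist_le {N : ℕ} {G : SimpleGraph (Fin N)} (hG : G.Connected) (i : Fin N) :
    2 * ∑ j, G.dist i j ≤ N * (N - 1) := by
  obtain ⟨j₀, -, hj₀⟩ := Finset.exists_max_image Finset.univ (fun j => G.dist i j) ⟨i, mem_univ i⟩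
  set e := G.dist i j₀ with he
  obtain ⟨p, hp⟩ := hG.exists_walk_length_eq_dist i j₀
  have hinj : Set.InjOn (fun t => p.getVert t) ↑(Finset.range (e+1)) := by
    intro s hs t ht hst
    have hs' : s ≤ p.length := by simp [hp, ← he] at hs ⊢; omega
    have ht' : t ≤ p.length := by simp [hp, ← he] at ht ⊢; omega
    have h1 := dist_getVert hG p hp hs'
    have h2 := dist_getVert hG p hp ht'
    simp only at hst
    rw [← h1, ← h2, hst]

  set R : Finset (Fin N) := (Finset.range (e+1)).image (fun t => p.getVert t) with hR
  have hcard : R.card = e + 1 := by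
    rw [hR, Finset.card_image_of_injOn hinj, Finset.card_range]
  have heN : e + 1 ≤ N := by
    have := Finset.card_le_card (Finset.subset_univ R)
    simpa [hcard] using this
  have hsumR : ∑ j ∈ R, G.dist i j = ∑ t ∈ Finset.range (e+1), t := by
    rw [hR, Finset.sum_image hinj]
    refine Finset.sum_congr rfl fun t ht => ?_
    exact dist_getVert hG p hp (by rw [hp, ← he]; simp at ht; omega)
  have hsplit : ∑ j, G.dist i j = ∑ j ∈ R, G.dist i j + ∑ j ∈ Finset.univ \ R, G.dist i j := by
    rw [add_comm, Finset.sum_sdiff (Finset.subset_univ R)]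
  have hrest : ∑ j ∈ Finset.univ \ R, G.dist i j ≤ (N - (e+1)) * e := by
    calc ∑ j ∈ Finset.univ \ R, G.dist i j ≤ ∑ _j ∈ Finset.univ \ R, e :=
          Finset.sum_le_sum fun j _ => hj₀ j (mem_univ j)
      _ = (N - (e+1)) * e := by
          rw [Finset.sum_const, smul_eq_mul, Finset.card_sdiff_of_subset (Finset.subset_univ R),
            hcard, Finset.card_univ, Fintype.card_fin]
  have hgauss : (∑ t ∈ Finset.range (e+1), t) * 2 = (e+1) * e := by
    simpa using Finset.sum_range_id_mul_two (e+1)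
  obtain ⟨m, hm⟩ : ∃ m, N - 1 = e + m := ⟨N - 1 - e, by omega⟩
  have hN : N = e + m + 1 := by omega
  calc 2 * ∑ j, G.dist i j = (∑ t ∈ Finset.range (e+1), t) * 2
        + 2 * ∑ j ∈ Finset.univ \ R, G.dist i j := by rw [hsplit, hsumR]; ring
    _ ≤ (e+1) * e + 2 * ((N - (e+1)) * e) := by
        rw [hgauss]; exact add_le_add le_rfl (by omega)
    _ ≤ N * (N - 1) := by
        have : N - (e+1) = m := by omega
        rw [this, hN]
        have h1 : e + m + 1 - 1 = e + m := by omega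
        rw [h1]
        nlinarith [Nat.zero_le m, Nat.zero_le e]

lemma pair_sq_le {N : ℕ} {G : SimpleGraph (Fin N)} [DecidableRel G.Adj]
    (hG : G.Connected) (v : Fin N → ℝ) (i j : Fin N) :
    2 * (v i - v j)^2 ≤ (G.dist i j : ℝ) *
      (∑ a, ∑ b, if G.Adj a b then (v a - v b)^2 else 0) := by
  set S : ℝ := ∑ a, ∑ b, if G.Adj a b then (v a - v b)^2 else 0 with hS
  have hS0 : 0 ≤ S := by
    apply Finset.sum_nonneg; intro a _; apply Finset.sum_nonneg; intro b _
    positivity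
  rcases eq_or_ne i j with rfl | hij
  · simp only [sub_self, ne_eq]
    rw [SimpleGraph.dist_self]
    simp
  · obtain ⟨p, hp⟩ := hG.exists_walk_length_eq_dist i j
    set L := p.length with hL
    set f : ℕ → ℝ := fun t => v (p.getVert t) with hf
    have gInj : ∀ s t, s ≤ L → t ≤ L → p.getVert s = p.getVert t → s = t := by
      intro s t hs ht hst
      have h1 := dist_getVert hG p hp hs
      have h2 := dist_getVert hG p hp ht
      rw [← h1, ← h2, hst]
    -- the q function on ordered pairs
    set q : Fin N × Fin N → ℝ := fun ab => if G.Adj ab.1 ab.2 then (v ab.1 - v ab.2)^2 else 0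
      with hq
    have hq0 : ∀ x, 0 ≤ q x := by intro x; rw [hq]; dsimp only; positivity
    have hSq : S = ∑ x : Fin N × Fin N, q x := by rw [hS, Fintype.sum_prod_type]
    set F1 : Finset (Fin N × Fin N) :=
      (Finset.range L).image (fun t => (p.getVert t, p.getVert (t+1))) with hF1
    set F2 : Finset (Fin N × Fin N) :=
      (Finset.range L).image (fun t => (p.getVert (t+1), p.getVert t)) with hF2
    have inj1 : Set.InjOn (fun t => (p.getVert t, p.getVert (t+1))) ↑(Finset.range L) := by
      intro s hs t ht h
      simp only [Prod.mk.injEq] at h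
      simp only [coe_range, Set.mem_Iio] at hs ht
      exact gInj s t (by omega) (by omega) h.1
    have inj2 : Set.InjOn (fun t => (p.getVert (t+1), p.getVert t)) ↑(Finset.range L) := by
      intro s hs t ht h
      simp only [Prod.mk.injEq] at h
      simp only [coe_range, Set.mem_Iio] at hs ht
      exact gInj s t (by omega) (by omega) h.2
    have hdisj : Disjoint F1 F2 := by
      rw [Finset.disjoint_left]
      rintro x hx1 hx2
      rw [hF1, Finset.mem_image] at hx1
      rw [hF2, Finset.mem_image] at hx2
      obtain ⟨s, hs, rfl⟩ := hx1
      obtain ⟨t, ht, heq⟩ := hx2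
      simp only [Prod.mk.injEq] at heq
      simp only [Finset.mem_range] at hs ht
      have e1 := gInj (t+1) s (by omega) (by omega) heq.1
      have e2 := gInj t (s+1) (by omega) (by omega) heq.2
      omega
    have hsum1 : ∑ x ∈ F1, q x = ∑ t ∈ Finset.range L, (f (t+1) - f t)^2 := by
      rw [hF1, Finset.sum_image inj1]
      refine Finset.sum_congr rfl fun t ht => ?_
      simp only [Finset.mem_range] at ht
      rw [hq]
      simp only
      rw [if_pos (p.adj_getVert_succ ht)]
      ring
    have hsum2 : ∑ x ∈ F2, q x = ∑ t ∈ Finset.range L, (f (t+1) - f t)^2 := by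
      rw [hF2, Finset.sum_image inj2]
      refine Finset.sum_congr rfl fun t ht => ?_
      simp only [Finset.mem_range] at ht
      rw [hq]
      simp only
      rw [if_pos (p.adj_getVert_succ ht).symm]
    have hkey : 2 * ∑ t ∈ Finset.range L, (f (t+1) - f t)^2 ≤ S := by
      rw [hSq]
      calc 2 * ∑ t ∈ Finset.range L, (f (t+1) - f t)^2
          = ∑ x ∈ F1 ∪ F2, q x := by rw [Finset.sum_union hdisj, hsum1, hsum2]; ring
        _ ≤ ∑ x : Fin N × Fin N, q x :=
            Finset.sum_le_sum_of_subset_of_nonneg (Finset.subset_univ _)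
              (fun x _ _ => hq0 x)
    have htel : ∑ t ∈ Finset.range L, (f (t+1) - f t) = v j - v i := by
      rw [Finset.sum_range_sub f L, hf]
      simp [hL]
    have hCS : (v j - v i)^2 ≤ (L : ℝ) * ∑ t ∈ Finset.range L, (f (t+1) - f t)^2 := by
      have := Finset.sum_mul_sq_le_sq_mul_sq (Finset.range L) (fun _ => (1:ℝ))
        (fun t => f (t+1) - f t)
      simp only [one_mul, one_pow, Finset.sum_const, Finset.card_range, nsmul_eq_mul,
        mul_one] at this
      rw [htel] at this
      exact this
    have hL' : (L : ℝ) = (G.dist i j : ℝ) := by exact_mod_cast congrArg Nat.cast hp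
    calc 2 * (v i - v j)^2 = (v j - v i)^2 + (v j - v i)^2 := by ring
      _ ≤ (L : ℝ) * ∑ t ∈ Finset.range L, (f (t+1) - f t)^2
          + (L : ℝ) * ∑ t ∈ Finset.range L, (f (t+1) - f t)^2 := add_le_add hCS hCS
      _ = (L : ℝ) * (2 * ∑ t ∈ Finset.range L, (f (t+1) - f t)^2) := by ring
      _ ≤ (L : ℝ) * S := by
          apply mul_le_mul_of_nonneg_left hkey
          positivity
      _ = (G.dist i j : ℝ) * S := by rw [hL']

lemma mu_bound {N : ℕ} (hN : 2 ≤ N) {G : SimpleGraph (Fin N)} [DecidableRel G.Adj]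
    (hG : G.Connected) {μ : ℝ} (hμ : μ ≠ 0) {v : Fin N → ℝ} (hv : v ≠ 0)
    (heq : G.lapMatrix ℝ *ᵥ v = μ • v) : 4 / (N:ℝ)^2 ≤ μ := by
  have hNR : (2:ℝ) ≤ (N:ℝ) := by exact_mod_cast hN
  set S : ℝ := ∑ a, ∑ b, if G.Adj a b then (v a - v b)^2 else 0 with hS
  set n2 : ℝ := ∑ k, v k ^ 2 with hn2def
  -- n2 > 0
  obtain ⟨k, hk⟩ := Function.ne_iff.mp hv
  simp only [Pi.zero_apply] at hk
  have hn2 : 0 < n2 := by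
    have h1 : v k ^ 2 ≤ n2 :=
      Finset.single_le_sum (f := fun k => v k ^ 2) (fun _ _ => sq_nonneg _) (mem_univ k)
    have h2 : 0 < v k ^ 2 := by positivity
    linarith
  -- sum of v is zero
  have hones : (fun _ => (1:ℝ)) ᵥ* (G.lapMatrix ℝ) = 0 := by
    have hsymm := G.isSymm_lapMatrix (R := ℝ)
    rw [← hsymm, Matrix.vecMul_transpose, SimpleGraph.lapMatrix_mulVec_const_eq_zero]
  have hsum0 : ∑ k, v k = 0 := by
    have h1 : (fun _ => (1:ℝ)) ⬝ᵥ (G.lapMatrix ℝ *ᵥ v) = 0 := by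
      rw [Matrix.dotProduct_mulVec, hones, zero_dotProduct]
    rw [heq, dotProduct_smul, smul_eq_mul] at h1
    have h2 : (fun _ => (1:ℝ)) ⬝ᵥ v = ∑ k, v k := by simp [dotProduct]
    rw [h2] at h1
    exact (mul_eq_zero.mp h1).resolve_left hμ
  -- quadratic form
  have hQ : v ⬝ᵥ (G.lapMatrix ℝ *ᵥ v) = μ * n2 := by
    rw [heq, dotProduct_smul, smul_eq_mul]
    congr 1
    simp [dotProduct, hn2def, sq]
  have hSid : S = 2 * (μ * n2) := by
    have h1 := G.lapMatrix_toLinearMap₂' (R := ℝ) v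
    rw [Matrix.toLinearMap₂'_apply'] at h1
    rw [← hS] at h1
    rw [hQ] at h1
    linarith
  have hS0 : 0 ≤ S := by
    apply Finset.sum_nonneg; intro a _; apply Finset.sum_nonneg; intro b _; positivity
  -- expansion identity
  have hexp : ∑ a, ∑ b, (v a - v b)^2 = 2 * N * n2 := by
    have h1 : ∀ a : Fin N, ∑ b, (v a - v b)^2 = N * v a ^ 2 - 2 * v a * (∑ b, v b) + n2 := by
      intro a
      have : ∀ b : Fin N, (v a - v b)^2 = v a ^2 - 2 * v a * v b + v b ^2 := fun b => by ring
      rw [Finset.sum_congr rfl fun b _ => this b]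
      rw [Finset.sum_add_distrib, Finset.sum_sub_distrib, Finset.sum_const, ← Finset.mul_sum]
      simp [hn2def, Finset.card_univ, mul_comm]
    rw [Finset.sum_congr rfl fun a _ => h1 a]
    rw [hsum0]
    simp only [mul_zero, sub_zero]
    rw [Finset.sum_add_distrib, Finset.sum_const, ← Finset.mul_sum]
    simp [hn2def, Finset.card_univ]
    ring
  -- distance sum bound, cast to ℝ
  have hdistR : ∑ a, ∑ b, (G.dist a b : ℝ) * S ≤ ((N:ℝ) * ((N:ℝ) * ((N:ℝ) - 1)) / 2) * S := by
    have h1 : ∑ a, ∑ b, (G.dist a b : ℝ) ≤ (N:ℝ) * ((N:ℝ) * ((N:ℝ) - 1)) / 2 := by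
      have h2 : ∀ a : Fin N, (2:ℝ) * ∑ b, (G.dist a b : ℝ) ≤ (N:ℝ) * ((N:ℝ) - 1) := by
        intro a
        have := sum_dist_le hG a
        have hcast : ((2 * ∑ j, G.dist a j : ℕ) : ℝ) ≤ ((N * (N-1) : ℕ) : ℝ) := by
          exact_mod_cast this
        push_cast at hcast
        rw [Nat.cast_sub (by omega)] at hcast
        · push_cast at hcast ⊢
          linarith
      have h3 : (2:ℝ) * ∑ a, ∑ b, (G.dist a b : ℝ) ≤ (N:ℝ) * ((N:ℝ) * ((N:ℝ) - 1)) := by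
        rw [Finset.mul_sum]
        calc ∑ a : Fin N, 2 * ∑ b, (G.dist a b : ℝ)
            ≤ ∑ _a : Fin N, (N:ℝ) * ((N:ℝ) - 1) := Finset.sum_le_sum fun a _ => h2 a
          _ = (N:ℝ) * ((N:ℝ) * ((N:ℝ) - 1)) := by
              rw [Finset.sum_const, Finset.card_univ, Fintype.card_fin, nsmul_eq_mul]
      linarith
    simp_rw [← Finset.sum_mul]
    exact mul_le_mul_of_nonneg_right h1 hS0
  -- combine
  have hNpos : (0:ℝ) < (N:ℝ) := by linarith
  have hpairs : ∑ a, ∑ b, 2 * (v a - v b)^2 ≤ ∑ a, ∑ b, (G.dist a b : ℝ) * S :=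
    Finset.sum_le_sum fun a _ => Finset.sum_le_sum fun b _ => pair_sq_le hG v a b
  have hlhs : ∑ a, ∑ b, 2 * (v a - v b)^2 = 4 * ((N:ℝ) * n2) := by
    simp_rw [← Finset.mul_sum]
    rw [hexp]; ring
  have hrhs : ((N:ℝ) * ((N:ℝ) * ((N:ℝ) - 1)) / 2) * S
      = (μ * ((N:ℝ) * ((N:ℝ) - 1))) * ((N:ℝ) * n2) := by
    rw [hSid]; ring
  have hfinal : 4 * ((N:ℝ) * n2) ≤ (μ * ((N:ℝ) * ((N:ℝ) - 1))) * ((N:ℝ) * n2) := by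
    rw [← hrhs]
    calc 4 * ((N:ℝ) * n2) = ∑ a, ∑ b, 2 * (v a - v b)^2 := hlhs.symm
      _ ≤ ∑ a, ∑ b, (G.dist a b : ℝ) * S := hpairs
      _ ≤ ((N:ℝ) * ((N:ℝ) * ((N:ℝ) - 1)) / 2) * S := hdistR
  have hNn2 : (0:ℝ) < (N:ℝ) * n2 := by positivity
  have h4 : 4 ≤ μ * ((N:ℝ) * ((N:ℝ) - 1)) := (mul_le_mul_iff_of_pos_right hNn2).mp hfinal
  have hμ0 : 0 ≤ μ := by
    have hQ0 : 0 ≤ v ⬝ᵥ (G.lapMatrix ℝ *ᵥ v) := by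
      have := (SimpleGraph.posSemidef_lapMatrix ℝ G).dotProduct_mulVec_nonneg v
      simpa using this
    rw [hQ] at hQ0
    nlinarith
  rw [div_le_iff₀ (by positivity)]
  nlinarith [mul_nonneg hμ0 hNpos.le]

end Lambda2Aux

open Matrix

/-- For a connected simple graph `G` on `Fin N` (`N ≥ 2`) with
Laplacian `L`, the algebraic connectivity satisfies
`λ₂ = sInf (spectrum ℝ L \ {0}) ≥ 4 / N²`. -/
theorem lambda2_ge_four_div_sq
    (N : ℕ) (hN : 2 ≤ N) (G : SimpleGraph (Fin N)) [DecidableRel G.Adj]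
    (hG : G.Connected) :
    4 / (N : ℝ) ^ 2 ≤ sInf (spectrum ℝ (G.lapMatrix ℝ) \ {0}) := by
  classical
  have hmem_iff : ∀ (μ : ℝ) (v : Fin N → ℝ), v ≠ 0 → G.lapMatrix ℝ *ᵥ v = μ • v →
      μ ∈ spectrum ℝ (G.lapMatrix ℝ) := by
    intro μ v hv h
    rw [← AlgEquiv.spectrum_eq (Matrix.toLinAlgEquiv' (R := ℝ) (n := Fin N)),
      ← Module.End.hasEigenvalue_iff_mem_spectrum]
    apply Module.End.hasEigenvalue_of_hasEigenvector (x := v)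
    refine ⟨Module.End.mem_eigenspace_iff.mpr ?_, hv⟩
    rw [Matrix.toLinAlgEquiv'_apply]; exact h
  -- the Laplacian is nonzero
  have hHerm : (G.lapMatrix ℝ).IsHermitian := (SimpleGraph.posSemidef_lapMatrix ℝ G).1
  set u0 : Fin N := ⟨0, by omega⟩ with hu0
  set u1 : Fin N := ⟨1, by omega⟩ with hu1
  have h01 : u0 ≠ u1 := by
    intro h
    have := congrArg Fin.val h
    simp [hu0, hu1] at this
  obtain ⟨w⟩ := hG.preconnected u0 u1
  have hwnil : ¬ w.Nil := SimpleGraph.Walk.not_nil_of_ne h01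
  have hadj0 : G.Adj u0 (w.getVert 1) := w.adj_snd hwnil
  have hLne : G.lapMatrix ℝ ≠ 0 := by
    intro h
    have hdeg : G.lapMatrix ℝ u0 u0 = (G.degree u0 : ℝ) := by
      simp [SimpleGraph.lapMatrix, SimpleGraph.degMatrix]
    rw [h] at hdeg
    have hpos : 0 < G.degree u0 := (G.degree_pos_iff_exists_adj u0).mpr ⟨_, hadj0⟩
    simp only [Matrix.zero_apply] at hdeg
    have : (0:ℝ) < (G.degree u0 : ℝ) := by exact_mod_cast hpos
    rw [← hdeg] at this
    exact lt_irrefl _ this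
  obtain ⟨v0, t0, ht0, hv0, hev0⟩ := hHerm.exists_eigenvector_of_ne_zero hLne
  have hne : (spectrum ℝ (G.lapMatrix ℝ) \ {0}).Nonempty :=
    ⟨t0, hmem_iff t0 v0 hv0 hev0, by simpa using ht0⟩
  apply le_csInf hne
  rintro μ ⟨hμs, hμ0⟩
  simp only [Set.mem_singleton_iff] at hμ0
  -- extract an eigenvector
  rw [← AlgEquiv.spectrum_eq (Matrix.toLinAlgEquiv' (R := ℝ) (n := Fin N)),
    ← Module.End.hasEigenvalue_iff_mem_spectrum] at hμs
  obtain ⟨v, hvmem, hvne⟩ := hμs.exists_hasEigenvector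
  have heq : G.lapMatrix ℝ *ᵥ v = μ • v := by
    have := Module.End.mem_eigenspace_iff.mp hvmem
    rwa [Matrix.toLinAlgEquiv'_apply] at this
  exact Lambda2Aux.mu_bound hN hG hμ0 hvne heq
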